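/- Let 0 < r₀ < r₁ and let (A, w) be an EYM solution on (r₀, r₁). If A(r) converges as r → r₀⁺ to a finite limit that is strictly positive, then w is bounded near r₀: lim sup_{r → r₀⁺} w(r) < +∞ and lim inf_{r → r₀⁺} w(r) > −∞. -/

import Mathlib

open Filter Topology Set

/-- The quantity Φ(r) = 1 − A(r) − (1 − w(r)²)²/r² − Λ·r². -/
noncomputable def Phi (Λ : ℝ) (A w : ℝ → ℝ) (r : ℝ) : ℝ :=
  1 - A r - (1 - (w r) ^ 2) ^ 2 / r ^ 2 - Λ * r ^ 2

/-- `(A, w)` is a static spherically symmetric Einstein SU(2)-Yang–Mills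
solution with cosmological constant `Λ` on the set `I`. -/
def IsEYM (Λ : ℝ) (A w : ℝ → ℝ) (I : Set ℝ) : Prop :=
  (∀ r ∈ I, DifferentiableAt ℝ A r) ∧
  (∀ r ∈ I, DifferentiableAt ℝ w r) ∧
  (∀ r ∈ I, DifferentiableAt ℝ (deriv w) r) ∧
  (∀ r ∈ I, r * deriv A r + 2 * A r * (deriv w r) ^ 2 = Phi Λ A w r) ∧
  (∀ r ∈ I, r ^ 2 * A r * deriv (deriv w) r + r * Phi Λ A w r * deriv w r
      + w r * (1 - (w r) ^ 2) = 0)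

set_option maxHeartbeats 1000000 in
/-- if `A` tends to a finite strictly positive limit as `r → r₀⁺`,
then `w` is bounded near `r₀`. -/
theorem stmt_4 (Λ r₀ r₁ : ℝ) (A w : ℝ → ℝ)
    (hr₀ : 0 < r₀) (hr₁ : r₀ < r₁)
    (hEYM : IsEYM Λ A w (Ioo r₀ r₁))
    (L : ℝ) (hL : 0 < L) (hA : Filter.Tendsto A (𝓝[>] r₀) (𝓝 L)) :
    Filter.limsup (fun r => (w r : EReal)) (𝓝[>] r₀) < ⊤ ∧
    ⊥ < Filter.liminf (fun r => (w r : EReal)) (𝓝[>] r₀) := by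
  obtain ⟨hdA, hdw, hdw', heq1, heq2⟩ := hEYM
  -- get a one-sided neighbourhood on which L/2 < A < L+1
  have hev : {r | L / 2 < A r ∧ A r < L + 1} ∈ 𝓝[>] r₀ := by
    have h1 : ∀ᶠ r in 𝓝[>] r₀, L / 2 < A r :=
      hA.eventually (eventually_gt_nhds (by linarith))
    have h2 : ∀ᶠ r in 𝓝[>] r₀, A r < L + 1 :=
      hA.eventually (eventually_lt_nhds (by linarith))
    filter_upwards [h1, h2] with r h1 h2; exact ⟨h1, h2⟩
  obtain ⟨c, hc, hsub⟩ := mem_nhdsGT_iff_exists_Ioo_subset.mp hev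
  have hc' : r₀ < c := hc
  set b : ℝ := (r₀ + min c r₁) / 2 with hbdef
  have hminr : r₀ < min c r₁ := lt_min hc' hr₁
  have hb₀ : r₀ < b := by simp only [hbdef]; linarith
  have hbm : b < min c r₁ := by simp only [hbdef]; linarith
  have hbc : b < c := lt_of_lt_of_le hbm (min_le_left _ _)
  have hbr₁ : b < r₁ := lt_of_lt_of_le hbm (min_le_right _ _)
  have hbmem : b ∈ Ioo r₀ r₁ := ⟨hb₀, hbr₁⟩
  have hbpos : 0 < b := lt_trans hr₀ hb₀
  set C₁ : ℝ := 1 + |Λ| * b ^ 2 + L + 1 with hC₁def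
  -- membership helpers
  have hmem : ∀ x ∈ Ioo r₀ b, x ∈ Ioo r₀ r₁ := fun x hx => ⟨hx.1, lt_trans hx.2 hbr₁⟩
  have hAbd : ∀ x ∈ Ioo r₀ b, L / 2 < A x ∧ A x < L + 1 := fun x hx =>
    hsub ⟨hx.1, lt_trans hx.2 hbc⟩
  -- key pointwise bound on |w'|
  have hkey : ∀ x ∈ Ioo r₀ b,
      |deriv w x| ≤ 1 / 2 + (C₁ - A x - x * deriv A x) / (2 * L) := by
    intro x hx
    have hx1 := hmem x hx
    have hAx := hAbd x hx
    have hxpos : 0 < x := lt_trans hr₀ hx.1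
    have he := heq1 x hx1
    have hsq : 0 ≤ (1 - w x ^ 2) ^ 2 / x ^ 2 := div_nonneg (sq_nonneg _) (sq_nonneg _)
    have hx2 : x ^ 2 ≤ b ^ 2 := by nlinarith [hx.2]
    have hLam : -(Λ * x ^ 2) ≤ |Λ| * b ^ 2 := by
      nlinarith [neg_abs_le Λ, abs_nonneg Λ, sq_nonneg x]
    have hPhi : Phi Λ A w x ≤ 1 + |Λ| * b ^ 2 - A x := by
      unfold Phi; linarith
    have h2A : L * (deriv w x) ^ 2 ≤ 2 * A x * (deriv w x) ^ 2 := by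
      nlinarith [sq_nonneg (deriv w x), hAx.1]
    have hD : L * (deriv w x) ^ 2 ≤ C₁ - A x - x * deriv A x := by
      simp only [hC₁def]; linarith [he, hPhi, h2A]
    have hq : (deriv w x) ^ 2 ≤ (C₁ - A x - x * deriv A x) / L := by
      rw [le_div_iff₀ hL]; linarith [hD]
    have habs : |deriv w x| ≤ (1 + (deriv w x) ^ 2) / 2 := by
      nlinarith [sq_nonneg (|deriv w x| - 1), sq_abs (deriv w x)]
    have h2L : (C₁ - A x - x * deriv A x) / (2 * L)
        = ((C₁ - A x - x * deriv A x) / L) / 2 := by ring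
    calc |deriv w x| ≤ (1 + (deriv w x) ^ 2) / 2 := habs
      _ ≤ 1 / 2 + (C₁ - A x - x * deriv A x) / (2 * L) := by
          rw [h2L]; linarith
  -- the auxiliary functions
  set g : ℝ → ℝ := fun y => (C₁ * y - y * A y) / (2 * L) with hgdef
  set χ : ℝ → ℝ := fun y => w y + y / 2 + g y with hχdef
  set φ : ℝ → ℝ := fun y => w y - y / 2 - g y with hφdef
  have hgderiv : ∀ x ∈ Ioo r₀ r₁,
      HasDerivAt g ((C₁ - (A x + x * deriv A x)) / (2 * L)) x := by
    intro x hx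
    have hA' := (hdA x hx).hasDerivAt
    have h1 : HasDerivAt (fun y : ℝ => C₁ * y - y * A y)
        (C₁ - (A x + x * deriv A x)) x := by
      have h2 := ((hasDerivAt_id x).const_mul C₁).sub ((hasDerivAt_id x).mul hA')
      exact h2.congr_deriv (by simp)
    exact h1.div_const (2 * L)
  have hχderiv : ∀ x ∈ Ioo r₀ r₁,
      HasDerivAt χ (deriv w x + 1 / 2 + (C₁ - (A x + x * deriv A x)) / (2 * L)) x := by
    intro x hx
    have hw := (hdw x hx).hasDerivAt
    have h2 := (hw.add ((hasDerivAt_id x).div_const 2)).add (hgderiv x hx)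
    exact h2.congr_deriv (by simp)
  have hφderiv : ∀ x ∈ Ioo r₀ r₁,
      HasDerivAt φ (deriv w x - 1 / 2 - (C₁ - (A x + x * deriv A x)) / (2 * L)) x := by
    intro x hx
    have hw := (hdw x hx).hasDerivAt
    have h2 := (hw.sub ((hasDerivAt_id x).div_const 2)).sub (hgderiv x hx)
    exact h2.congr_deriv (by simp)
  -- monotonicity gives the bounds
  have hbound : ∀ r ∈ Ioo r₀ b, χ r ≤ χ b ∧ φ b ≤ φ r := by
    intro r hr
    have hsubI : Icc r b ⊆ Ioo r₀ r₁ := fun y hy =>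
      ⟨lt_of_lt_of_le hr.1 hy.1, lt_of_le_of_lt hy.2 hbr₁⟩
    have hsubI' : Ioo r b ⊆ Ioo r₀ b := fun y hy => ⟨lt_trans hr.1 hy.1, hy.2⟩
    have hint : interior (Icc r b) = Ioo r b := interior_Icc
    have hχc : ContinuousOn χ (Icc r b) := fun y hy =>
      ((hχderiv y (hsubI hy)).differentiableAt.continuousAt).continuousWithinAt
    have hφc : ContinuousOn φ (Icc r b) := fun y hy =>
      ((hφderiv y (hsubI hy)).differentiableAt.continuousAt).continuousWithinAt
    have hχm : MonotoneOn χ (Icc r b) := by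
      apply monotoneOn_of_deriv_nonneg (convex_Icc r b) hχc
      · rw [hint]
        exact fun y hy => ((hχderiv y (hsubI (Ioo_subset_Icc_self hy))).differentiableAt).differentiableWithinAt
      · rw [hint]
        intro y hy
        have hy' : y ∈ Ioo r₀ b := hsubI' hy
        rw [(hχderiv y (hmem y hy')).deriv]
        have := hkey y hy'
        have h3 := neg_abs_le (deriv w y)
        have : -(1 / 2 + (C₁ - A y - y * deriv A y) / (2 * L)) ≤ deriv w y := by
          linarith [abs_le.mp (hkey y hy') |>.1]
        have he : (C₁ - (A y + y * deriv A y)) / (2 * L)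
            = (C₁ - A y - y * deriv A y) / (2 * L) := by ring_nf
        rw [he]; linarith
    have hφm : AntitoneOn φ (Icc r b) := by
      apply antitoneOn_of_deriv_nonpos (convex_Icc r b) hφc
      · rw [hint]
        exact fun y hy => ((hφderiv y (hsubI (Ioo_subset_Icc_self hy))).differentiableAt).differentiableWithinAt
      · rw [hint]
        intro y hy
        have hy' : y ∈ Ioo r₀ b := hsubI' hy
        rw [(hφderiv y (hmem y hy')).deriv]
        have h4 : deriv w y ≤ 1 / 2 + (C₁ - A y - y * deriv A y) / (2 * L) :=
          le_trans (le_abs_self _) (hkey y hy')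
        have he : (C₁ - (A y + y * deriv A y)) / (2 * L)
            = (C₁ - A y - y * deriv A y) / (2 * L) := by ring_nf
        rw [he]; linarith
    exact ⟨hχm ⟨le_refl r, hr.2.le⟩ ⟨hr.2.le, le_refl b⟩ hr.2.le,
           hφm ⟨le_refl r, hr.2.le⟩ ⟨hr.2.le, le_refl b⟩ hr.2.le⟩
  -- hence w is bounded on (r₀, b)
  have hwub : ∀ r ∈ Ioo r₀ b, w r ≤ χ b := by
    intro r hr
    have h1 := (hbound r hr).1
    have hAr := hAbd r hr
    have hrpos : 0 < r := lt_trans hr₀ hr.1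
    have hg0 : 0 ≤ g r := by
      simp only [hgdef]
      apply div_nonneg _ (by linarith)
      have : A r ≤ C₁ := by simp only [hC₁def]; nlinarith [abs_nonneg Λ, sq_nonneg b]
      nlinarith
    simp only [hχdef] at h1 ⊢
    linarith
  have hwlb : ∀ r ∈ Ioo r₀ b, φ b ≤ w r := by
    intro r hr
    have h1 := (hbound r hr).2
    have hAr := hAbd r hr
    have hrpos : 0 < r := lt_trans hr₀ hr.1
    have hg0 : 0 ≤ g r := by
      simp only [hgdef]
      apply div_nonneg _ (by linarith)
      have : A r ≤ C₁ := by simp only [hC₁def]; nlinarith [abs_nonneg Λ, sq_nonneg b]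
      nlinarith
    simp only [hφdef] at h1 ⊢
    linarith
  have hIoo : Ioo r₀ b ∈ 𝓝[>] r₀ := Ioo_mem_nhdsGT hb₀
  constructor
  · have hub : ∀ᶠ r in 𝓝[>] r₀, (fun r => (w r : EReal)) r ≤ (χ b : EReal) := by
      filter_upwards [hIoo] with r hr
      exact_mod_cast hwub r hr
    exact lt_of_le_of_lt (limsup_le_of_le (h := hub)) (EReal.coe_lt_top _)
  · have hlb : ∀ᶠ r in 𝓝[>] r₀, (φ b : EReal) ≤ (fun r => (w r : EReal)) r := by
      filter_upwards [hIoo] with r hr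
      exact_mod_cast hwlb r hr
    exact lt_of_lt_of_le (EReal.bot_lt_coe _) (le_liminf_of_le (h := hlb))
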